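/- Let μ be the Gibbs distribution of a permissive spin system (G,q,A_E,A_V) and suppose μ satisfies C-coupling independence for some C > 0. Then μ satisfies total influence decay with rate δ(x) = 2C·2^{−⌈x/(2C)⌉}: for every Λ ⊆ V, all partial configurations σ,τ : Λ → [q] that differ only at a vertex v ∈ Λ, and every integer ℓ > 0, Σ_{u ∈ S_ℓ(v)} d_TV(μ^σ_u, μ^τ_u) ≤ 2C·2^{−⌈ℓ/(2C)⌉}. -/

import Mathlib

open scoped Classical BigOperators

noncomputable section

namespace SpinFormal

variable {V : Type} [Fintype V] [DecidableEq V] {q : ℕ}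

/-- `μ` is a probability distribution on the finite type `Ω`. -/
def IsDist {Ω : Type} [Fintype Ω] (μ : Ω → ℝ) : Prop :=
  (∀ x, 0 ≤ μ x) ∧ ∑ x, μ x = 1

/-- `π` is a coupling of `μ` and `ν`. -/
def IsCoupling {Ω₁ Ω₂ : Type} [Fintype Ω₁] [Fintype Ω₂]
    (π : Ω₁ × Ω₂ → ℝ) (μ : Ω₁ → ℝ) (ν : Ω₂ → ℝ) : Prop :=
  (∀ p, 0 ≤ π p) ∧ (∀ x, ∑ y, π (x, y) = μ x) ∧ (∀ y, ∑ x, π (x, y) = ν y)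

/-- 1-Wasserstein distance with respect to a cost `d`. -/
def Wass {Ω₁ Ω₂ : Type} [Fintype Ω₁] [Fintype Ω₂] (d : Ω₁ → Ω₂ → ℝ)
    (μ : Ω₁ → ℝ) (ν : Ω₂ → ℝ) : ℝ :=
  sInf {c : ℝ | ∃ π : Ω₁ × Ω₂ → ℝ, IsCoupling π μ ν ∧ ∑ p : Ω₁ × Ω₂, π p * d p.1 p.2 = c}

/-- Hamming distance between two configurations, as a real number. -/
def hamming {W : Type} [Fintype W] {α : Type} [DecidableEq α] (σ τ : W → α) : ℝ :=
  ((Finset.univ.filter fun w => σ w ≠ τ w).card : ℝ)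

/-- Total variation distance between two functions on a finite type. -/
def tvDist {X : Type} [Fintype X] (μ ν : X → ℝ) : ℝ := (∑ x, |μ x - ν x|) / 2

/-- The symmetrised edge interaction, as a function on unordered pairs.
When `AE` is symmetric this is just `AE (τ u) (τ v)` on the edge `{u,v}`. -/
def edgeFactor (AE : Fin q → Fin q → ℝ) (τ : V → Fin q) : Sym2 V → ℝ :=
  Sym2.lift ⟨fun u v => (AE (τ u) (τ v) + AE (τ v) (τ u)) / 2, fun u v => by simp [add_comm]⟩

/-- The conditional weight `w^σ(τ)` for the pinning `σ` on `Λ`: products range over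
vertices outside `Λ` and edges with at least one endpoint outside `Λ`. -/
def condWeight (G : SimpleGraph V) (AE : Fin q → Fin q → ℝ) (AV : Fin q → ℝ)
    (Λ : Finset V) (σ τ : V → Fin q) : ℝ :=
  (if ∀ v ∈ Λ, τ v = σ v then (1 : ℝ) else 0)
    * (∏ v ∈ Λᶜ, AV (τ v))
    * ∏ e ∈ Finset.univ.filter
        (fun e : Sym2 V => e ∈ G.edgeSet ∧ ¬ ∀ v ∈ e, v ∈ Λ), edgeFactor AE τ e

/-- The conditional partition function `Z^σ`. -/
def condZ (G : SimpleGraph V) (AE : Fin q → Fin q → ℝ) (AV : Fin q → ℝ)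
    (Λ : Finset V) (σ : V → Fin q) : ℝ :=
  ∑ τ : V → Fin q, condWeight G AE AV Λ σ τ

/-- The conditional Gibbs distribution `μ^σ`. -/
def condDist (G : SimpleGraph V) (AE : Fin q → Fin q → ℝ) (AV : Fin q → ℝ)
    (Λ : Finset V) (σ : V → Fin q) : (V → Fin q) → ℝ :=
  fun τ => condWeight G AE AV Λ σ τ / condZ G AE AV Λ σ

/-- A spin system is permissive if every conditional partition function is positive. -/
def Permissive (G : SimpleGraph V) (AE : Fin q → Fin q → ℝ) (AV : Fin q → ℝ) : Prop :=
  ∀ (Λ : Finset V) (σ : V → Fin q), 0 < condZ G AE AV Λ σ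

/-- Marginal of a distribution on configurations at a single vertex. -/
def marginalAt (μ : (V → Fin q) → ℝ) (u : V) (c : Fin q) : ℝ :=
  ∑ τ : V → Fin q, if τ u = c then μ τ else 0

/-- Marginal probability of a partial configuration `σ` on `Λ`. -/
def margOn (μ : (V → Fin q) → ℝ) (Λ : Finset V) (σ : V → Fin q) : ℝ :=
  ∑ τ : V → Fin q, if ∀ v ∈ Λ, τ v = σ v then μ τ else 0

/-- Two partial configurations on `Λ` differ exactly at the vertex `v ∈ Λ`. -/
def DifferOnlyAt (Λ : Finset V) (σ τ : V → Fin q) (v : V) : Prop :=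
  v ∈ Λ ∧ σ v ≠ τ v ∧ ∀ u ∈ Λ, u ≠ v → σ u = τ u

/-- `C`-coupling independence of the Gibbs distribution of a spin system. -/
def CouplingIndependence (G : SimpleGraph V) (AE : Fin q → Fin q → ℝ)
    (AV : Fin q → ℝ) (C : ℝ) : Prop :=
  ∀ (Λ : Finset V) (σ τ : V → Fin q) (v : V), DifferOnlyAt Λ σ τ v →
    Wass hamming (condDist G AE AV Λ σ) (condDist G AE AV Λ τ) ≤ C

/-- The sphere of radius `ℓ` around `v` in `G` (w.r.t. graph distance). -/
def sphere (G : SimpleGraph V) (v : V) (ℓ : ℕ) : Finset V :=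
  Finset.univ.filter fun u => G.Reachable v u ∧ G.dist v u = ℓ

end SpinFormal

namespace SpinProof
open Finset SpinFormal
set_option linter.unusedSectionVars false

variable {V : Type} [Fintype V] [DecidableEq V] {q : ℕ}
variable (G : SimpleGraph V) (AE : Fin q → Fin q → ℝ) (AV : Fin q → ℝ)

lemma edgeFactor_nonneg (hAEnn : ∀ i j, 0 ≤ AE i j) (t : V → Fin q) (e : Sym2 V) :
    0 ≤ edgeFactor AE t e := by
  induction e using Sym2.ind with
  | _ a b =>
    show 0 ≤ (AE (t a) (t b) + AE (t b) (t a)) / 2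
    have h1 := hAEnn (t a) (t b)
    have h2 := hAEnn (t b) (t a)
    linarith

lemma edgeFactor_congr {t t' : V → Fin q} {e : Sym2 V} (h : ∀ w ∈ e, t w = t' w) :
    edgeFactor AE t e = edgeFactor AE t' e := by
  induction e using Sym2.ind with
  | _ a b =>
    have ha := h a (Sym2.mem_mk_left a b)
    have hb := h b (Sym2.mem_mk_right a b)
    show (AE (t a) (t b) + AE (t b) (t a)) / 2 = (AE (t' a) (t' b) + AE (t' b) (t' a)) / 2
    rw [ha, hb]

lemma condWeight_nonneg (hAEnn : ∀ i j, 0 ≤ AE i j) (hAVnn : ∀ i, 0 ≤ AV i)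
    (Λ : Finset V) (σ τ : V → Fin q) : 0 ≤ condWeight G AE AV Λ σ τ := by
  unfold condWeight
  have h1 : (0:ℝ) ≤ if ∀ v ∈ Λ, τ v = σ v then (1:ℝ) else 0 := by positivity
  have h2 : (0:ℝ) ≤ ∏ v ∈ Λᶜ, AV (τ v) := Finset.prod_nonneg fun v _ => hAVnn _
  have h3 : (0:ℝ) ≤ ∏ e ∈ Finset.univ.filter
      (fun e : Sym2 V => e ∈ G.edgeSet ∧ ¬ ∀ v ∈ e, v ∈ Λ), edgeFactor AE τ e :=
    Finset.prod_nonneg fun e _ => edgeFactor_nonneg AE hAEnn τ e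
  exact mul_nonneg (mul_nonneg h1 h2) h3

lemma condWeight_eq_zero_of_ne {Λ : Finset V} {σ τ : V → Fin q} {v : V}
    (hv : v ∈ Λ) (hne : τ v ≠ σ v) : condWeight G AE AV Λ σ τ = 0 := by
  unfold condWeight
  rw [if_neg (fun h => hne (h v hv))]
  ring

lemma condWeight_pin_congr {Λ : Finset V} {σ σ' : V → Fin q} (h : ∀ w ∈ Λ, σ w = σ' w)
    (τ : V → Fin q) : condWeight G AE AV Λ σ τ = condWeight G AE AV Λ σ' τ := by
  unfold condWeight
  congr 2
  by_cases hh : ∀ v ∈ Λ, τ v = σ v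
  · rw [if_pos hh, if_pos fun v hv => (hh v hv).trans (h v hv)]
  · rw [if_neg hh, if_neg fun hh' => hh fun v hv => (hh' v hv).trans (h v hv).symm]

lemma condZ_pin_congr {Λ : Finset V} {σ σ' : V → Fin q} (h : ∀ w ∈ Λ, σ w = σ' w) :
    condZ G AE AV Λ σ = condZ G AE AV Λ σ' :=
  Finset.sum_congr rfl fun τ _ => condWeight_pin_congr G AE AV h τ

lemma condDist_pin_congr {Λ : Finset V} {σ σ' : V → Fin q} (h : ∀ w ∈ Λ, σ w = σ' w) :
    condDist G AE AV Λ σ = condDist G AE AV Λ σ' := by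
  funext τ
  unfold condDist
  rw [condWeight_pin_congr G AE AV h τ, condZ_pin_congr G AE AV h]

lemma condDist_nonneg (hAEnn : ∀ i j, 0 ≤ AE i j) (hAVnn : ∀ i, 0 ≤ AV i)
    (hperm : Permissive G AE AV) (Λ : Finset V) (σ τ : V → Fin q) :
    0 ≤ condDist G AE AV Λ σ τ :=
  div_nonneg (condWeight_nonneg G AE AV hAEnn hAVnn Λ σ τ) (hperm Λ σ).le

lemma condDist_sum (hperm : Permissive G AE AV) (Λ : Finset V) (σ : V → Fin q) :
    ∑ τ : V → Fin q, condDist G AE AV Λ σ τ = 1 := by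
  unfold condDist
  rw [← Finset.sum_div]
  exact div_self (hperm Λ σ).ne'

lemma condDist_eq_zero_of_ne {Λ : Finset V} {σ τ : V → Fin q} {v : V}
    (hv : v ∈ Λ) (hne : τ v ≠ σ v) : condDist G AE AV Λ σ τ = 0 := by
  unfold condDist
  rw [condWeight_eq_zero_of_ne G AE AV hv hne, zero_div]

lemma tvDist_nonneg {X : Type} [Fintype X] (μ ν : X → ℝ) : 0 ≤ tvDist μ ν := by
  unfold tvDist
  positivity

lemma tvDist_triangle {X : Type} [Fintype X] (μ ν ξ : X → ℝ) :
    tvDist μ ξ ≤ tvDist μ ν + tvDist ν ξ := by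
  unfold tvDist
  rw [← add_div, div_le_div_iff_of_pos_right (by norm_num), ← Finset.sum_add_distrib]
  exact Finset.sum_le_sum fun x _ => abs_sub_le _ _ _


/-- correction factor between pinnings on `Λ ⊆ Λ'`. -/
def ratioR (G : SimpleGraph V) (AE : Fin q → Fin q → ℝ) (AV : Fin q → ℝ)
    (Λ Λ' : Finset V) (t : V → Fin q) : ℝ :=
  (∏ w ∈ Λ' \ Λ, AV (t w)) *
    ∏ e ∈ Finset.univ.filter
      (fun e : Sym2 V => e ∈ G.edgeSet ∧ ¬(∀ v ∈ e, v ∈ Λ) ∧ (∀ v ∈ e, v ∈ Λ')),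
      edgeFactor AE t e

lemma condWeight_ratio {Λ Λ' : Finset V} (hΛ : Λ ⊆ Λ') (σ t x : V → Fin q)
    (hxt : ∀ w ∈ Λ', x w = t w) (htσ : ∀ w ∈ Λ, t w = σ w) :
    condWeight G AE AV Λ σ x = ratioR G AE AV Λ Λ' t * condWeight G AE AV Λ' t x := by
  unfold condWeight ratioR
  rw [if_pos (fun v hv => (hxt v (hΛ hv)).trans (htσ v hv)), if_pos hxt]
  -- vertex part
  have hvsplit : Λᶜ = (Λ' \ Λ) ∪ Λ'ᶜ := by
    ext w
    simp only [Finset.mem_compl, Finset.mem_union, Finset.mem_sdiff]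
    constructor
    · intro hw
      by_cases h' : w ∈ Λ'
      · exact Or.inl ⟨h', hw⟩
      · exact Or.inr h'
    · rintro (⟨_, hw⟩ | hw)
      · exact hw
      · exact fun hc => hw (hΛ hc)
  have hvdisj : Disjoint (Λ' \ Λ) Λ'ᶜ := by
    rw [Finset.disjoint_right]
    intro a ha ha'
    exact (Finset.mem_compl.mp ha) (Finset.mem_sdiff.mp ha').1
  have hv : (∏ v ∈ Λᶜ, AV (x v))
      = (∏ w ∈ Λ' \ Λ, AV (t w)) * ∏ v ∈ Λ'ᶜ, AV (x v) := by
    rw [hvsplit, Finset.prod_union hvdisj]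
    congr 1
    refine Finset.prod_congr rfl fun w hw => ?_
    rw [hxt w (Finset.mem_sdiff.mp hw).1]
  -- edge part
  have hesplit : (Finset.univ.filter
      (fun e : Sym2 V => e ∈ G.edgeSet ∧ ¬ ∀ v ∈ e, v ∈ Λ))
      = (Finset.univ.filter
          (fun e : Sym2 V => e ∈ G.edgeSet ∧ ¬(∀ v ∈ e, v ∈ Λ) ∧ (∀ v ∈ e, v ∈ Λ')))
        ∪ (Finset.univ.filter
          (fun e : Sym2 V => e ∈ G.edgeSet ∧ ¬ ∀ v ∈ e, v ∈ Λ')) := by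
    ext e
    simp only [Finset.mem_filter, Finset.mem_union, Finset.mem_univ, true_and]
    constructor
    · rintro ⟨he, hni⟩
      by_cases h' : ∀ v ∈ e, v ∈ Λ'
      · exact Or.inl ⟨he, hni, h'⟩
      · exact Or.inr ⟨he, h'⟩
    · rintro (⟨he, hni, _⟩ | ⟨he, hni⟩)
      · exact ⟨he, hni⟩
      · exact ⟨he, fun hc => hni fun v hv => hΛ (hc v hv)⟩
  have hedisj : Disjoint (Finset.univ.filter
      (fun e : Sym2 V => e ∈ G.edgeSet ∧ ¬(∀ v ∈ e, v ∈ Λ) ∧ (∀ v ∈ e, v ∈ Λ')))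
      (Finset.univ.filter
          (fun e : Sym2 V => e ∈ G.edgeSet ∧ ¬ ∀ v ∈ e, v ∈ Λ')) := by
    rw [Finset.disjoint_right]
    intro e he he'
    simp only [Finset.mem_filter] at he he'
    exact he.2.2 he'.2.2.2
  have hee : (∏ e ∈ Finset.univ.filter
      (fun e : Sym2 V => e ∈ G.edgeSet ∧ ¬ ∀ v ∈ e, v ∈ Λ), edgeFactor AE x e)
      = (∏ e ∈ Finset.univ.filter
          (fun e : Sym2 V => e ∈ G.edgeSet ∧ ¬(∀ v ∈ e, v ∈ Λ) ∧ (∀ v ∈ e, v ∈ Λ')),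
          edgeFactor AE t e)
        * ∏ e ∈ Finset.univ.filter
          (fun e : Sym2 V => e ∈ G.edgeSet ∧ ¬ ∀ v ∈ e, v ∈ Λ'), edgeFactor AE x e := by
    rw [hesplit, Finset.prod_union hedisj]
    congr 1
    refine Finset.prod_congr rfl fun e he => ?_
    simp only [Finset.mem_filter] at he
    exact edgeFactor_congr AE fun w hw => hxt w (he.2.2.2 w hw)
  rw [hv, hee]
  ring

lemma tower (hAEnn : ∀ i j, 0 ≤ AE i j) (hAVnn : ∀ i, 0 ≤ AV i)
    (hperm : Permissive G AE AV) {Λ Λ' : Finset V} (hΛ : Λ ⊆ Λ') (σ t : V → Fin q) :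
    condDist G AE AV Λ σ t
      = ∑ x : V → Fin q, condDist G AE AV Λ σ x * condDist G AE AV Λ' x t := by
  have hstep : ∀ x : V → Fin q,
      condDist G AE AV Λ σ x * condDist G AE AV Λ' x t
        = (if ∀ w ∈ Λ', x w = t w then condDist G AE AV Λ σ x else 0)
            * condDist G AE AV Λ' t t := by
    intro x
    by_cases h : ∀ w ∈ Λ', x w = t w
    · rw [if_pos h, condDist_pin_congr G AE AV h]
    · rw [if_neg h, zero_mul]
      push_neg at h
      obtain ⟨w, hw, hne⟩ := h
      rw [condDist_eq_zero_of_ne G AE AV hw (fun hc => hne hc.symm), mul_zero]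
  rw [Finset.sum_congr rfl fun x _ => hstep x, ← Finset.sum_mul]
  by_cases htσ : ∀ w ∈ Λ, t w = σ w
  · have hsum : (∑ x : V → Fin q, if ∀ w ∈ Λ', x w = t w then condDist G AE AV Λ σ x else 0)
        = ratioR G AE AV Λ Λ' t * condZ G AE AV Λ' t / condZ G AE AV Λ σ := by
      have : ∀ x : V → Fin q,
          (if ∀ w ∈ Λ', x w = t w then condDist G AE AV Λ σ x else 0)
            = ratioR G AE AV Λ Λ' t * condWeight G AE AV Λ' t x / condZ G AE AV Λ σ := by
        intro x
        by_cases h : ∀ w ∈ Λ', x w = t w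
        · rw [if_pos h]
          unfold condDist
          rw [condWeight_ratio G AE AV hΛ σ t x h htσ]
        · rw [if_neg h]
          push_neg at h
          obtain ⟨w, hw, hne⟩ := h
          rw [condWeight_eq_zero_of_ne G AE AV hw hne, mul_zero, zero_div]
      rw [Finset.sum_congr rfl fun x _ => this x, ← Finset.sum_div, ← Finset.mul_sum]
      rfl
    rw [hsum]
    have hz' := (hperm Λ' t).ne'
    have key : ∀ (R w Z Zs : ℝ), Z ≠ 0 → R * Z / Zs * (w / Z) = R * w / Zs := by
      intro R w Z Zs hZ
      rw [div_mul_div_comm, mul_right_comm R Z w, mul_div_mul_right _ _ hZ]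
    unfold condDist
    rw [key _ _ _ _ hz', ← condWeight_ratio G AE AV hΛ σ t t (fun _ _ => rfl) htσ]
  · have h0 : ∀ x : V → Fin q,
        (if ∀ w ∈ Λ', x w = t w then condDist G AE AV Λ σ x else 0) = 0 := by
      intro x
      by_cases h : ∀ w ∈ Λ', x w = t w
      · rw [if_pos h]
        push_neg at htσ
        obtain ⟨w, hw, hne⟩ := htσ
        exact condDist_eq_zero_of_ne G AE AV hw (by rw [h w (hΛ hw)]; exact hne)
      · rw [if_neg h]
    rw [Finset.sum_congr rfl fun x _ => h0 x, Finset.sum_const, smul_zero, zero_mul]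
    push_neg at htσ
    obtain ⟨w, hw, hne⟩ := htσ
    exact condDist_eq_zero_of_ne G AE AV hw hne


lemma marginalAt_tower (hAEnn : ∀ i j, 0 ≤ AE i j) (hAVnn : ∀ i, 0 ≤ AV i)
    (hperm : Permissive G AE AV) {Λ Λ' : Finset V} (hΛ : Λ ⊆ Λ') (σ : V → Fin q)
    (u : V) (c : Fin q) :
    marginalAt (condDist G AE AV Λ σ) u c
      = ∑ x : V → Fin q, condDist G AE AV Λ σ x
          * marginalAt (condDist G AE AV Λ' x) u c := by
  unfold marginalAt
  have h1 : ∀ t : V → Fin q,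
      (if t u = c then condDist G AE AV Λ σ t else 0)
        = ∑ x : V → Fin q, condDist G AE AV Λ σ x
            * (if t u = c then condDist G AE AV Λ' x t else 0) := by
    intro t
    by_cases h : t u = c
    · simp only [if_pos h]
      exact tower G AE AV hAEnn hAVnn hperm hΛ σ t
    · simp only [if_neg h, mul_zero, Finset.sum_const_zero]
  rw [Finset.sum_congr rfl fun t _ => h1 t, Finset.sum_comm]
  refine Finset.sum_congr rfl fun x _ => ?_
  rw [← Finset.mul_sum]

lemma coupling_sum_one {μ ν : (V → Fin q) → ℝ} {π : ((V → Fin q) × (V → Fin q)) → ℝ}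
    (hπ : IsCoupling π μ ν) (hμ : ∑ x : V → Fin q, μ x = 1) :
    ∑ p : (V → Fin q) × (V → Fin q), π p = 1 := by
  rw [Fintype.sum_prod_type]
  rw [Finset.sum_congr rfl fun x _ => hπ.2.1 x]
  exact hμ

lemma coupling_le_left {μ ν : (V → Fin q) → ℝ} {π : ((V → Fin q) × (V → Fin q)) → ℝ}
    (hπ : IsCoupling π μ ν) (p : (V → Fin q) × (V → Fin q)) : π p ≤ μ p.1 := by
  rw [← hπ.2.1 p.1]
  exact Finset.single_le_sum (fun y _ => hπ.1 (p.1, y)) (Finset.mem_univ p.2)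

lemma coupling_le_right {μ ν : (V → Fin q) → ℝ} {π : ((V → Fin q) × (V → Fin q)) → ℝ}
    (hπ : IsCoupling π μ ν) (p : (V → Fin q) × (V → Fin q)) : π p ≤ ν p.2 := by
  rw [← hπ.2.2 p.2]
  exact Finset.single_le_sum (fun x _ => hπ.1 (x, p.2)) (Finset.mem_univ p.1)

/-- on the support of a coupling of `μ^σ` and `μ^τ`, the first component agrees with `σ`
on `Λ` and the second with `τ`. -/
lemma coupling_support {Λ : Finset V} {σ τ : V → Fin q}
    {π : ((V → Fin q) × (V → Fin q)) → ℝ}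
    (hπ : IsCoupling π (condDist G AE AV Λ σ) (condDist G AE AV Λ τ))
    {p : (V → Fin q) × (V → Fin q)} (hp : π p ≠ 0) :
    (∀ w ∈ Λ, p.1 w = σ w) ∧ (∀ w ∈ Λ, p.2 w = τ w) := by
  constructor
  · intro w hw
    by_contra hne
    exact hp (le_antisymm (by
      calc π p ≤ condDist G AE AV Λ σ p.1 := coupling_le_left hπ p
        _ = 0 := condDist_eq_zero_of_ne G AE AV hw hne) (hπ.1 p))
  · intro w hw
    by_contra hne
    exact hp (le_antisymm (by
      calc π p ≤ condDist G AE AV Λ τ p.2 := coupling_le_right hπ p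
        _ = 0 := condDist_eq_zero_of_ne G AE AV hw hne) (hπ.1 p))

/-- a pinned disagreement vertex always disagrees in the coupling. -/
lemma coupling_pinned_disagree (hperm : Permissive G AE AV)
    {Λ : Finset V} {σ τ : V → Fin q} {v : V} (hv : v ∈ Λ) (hστ : σ v ≠ τ v)
    {π : ((V → Fin q) × (V → Fin q)) → ℝ}
    (hπ : IsCoupling π (condDist G AE AV Λ σ) (condDist G AE AV Λ τ)) :
    ∑ p : (V → Fin q) × (V → Fin q), π p * (if p.1 v ≠ p.2 v then (1:ℝ) else 0) = 1 := by
  have h1 : ∀ p : (V → Fin q) × (V → Fin q),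
      π p * (if p.1 v ≠ p.2 v then (1:ℝ) else 0) = π p := by
    intro p
    by_cases hp : π p = 0
    · rw [hp, zero_mul]
    · obtain ⟨h1, h2⟩ := coupling_support G AE AV hπ hp
      rw [if_pos (by rw [h1 v hv, h2 v hv]; exact hστ), mul_one]
  rw [Finset.sum_congr rfl fun p _ => h1 p]
  exact coupling_sum_one hπ (condDist_sum G AE AV hperm Λ σ)

/-- single-vertex total variation is bounded by the disagreement probability. -/
lemma tvDist_marginal_le_coupling {μ ν : (V → Fin q) → ℝ}
    {π : ((V → Fin q) × (V → Fin q)) → ℝ} (hπ : IsCoupling π μ ν) (u : V) :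
    tvDist (marginalAt μ u) (marginalAt ν u)
      ≤ ∑ p : (V → Fin q) × (V → Fin q), π p * (if p.1 u ≠ p.2 u then (1:ℝ) else 0) := by
  have hmargμ : ∀ c, marginalAt μ u c
      = ∑ p : (V → Fin q) × (V → Fin q), π p * (if p.1 u = c then (1:ℝ) else 0) := by
    intro c
    unfold marginalAt
    rw [Fintype.sum_prod_type]
    refine Finset.sum_congr rfl fun x _ => ?_
    dsimp only
    rw [show (∑ y, π (x, y) * if x u = c then (1:ℝ) else 0) = (∑ y, π (x, y)) * (if x u = c then (1:ℝ) else 0) from (Finset.sum_mul _ _ _).symm, hπ.2.1 x]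
    by_cases h : x u = c
    · rw [if_pos h, if_pos h, mul_one]
    · rw [if_neg h, if_neg h, mul_zero]
  have hmargν : ∀ c, marginalAt ν u c
      = ∑ p : (V → Fin q) × (V → Fin q), π p * (if p.2 u = c then (1:ℝ) else 0) := by
    intro c
    unfold marginalAt
    rw [Fintype.sum_prod_type_right]
    refine Finset.sum_congr rfl fun y _ => ?_
    dsimp only
    rw [show (∑ x, π (x, y) * if y u = c then (1:ℝ) else 0) = (∑ x, π (x, y)) * (if y u = c then (1:ℝ) else 0) from (Finset.sum_mul _ _ _).symm, hπ.2.2 y]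
    by_cases h : y u = c
    · rw [if_pos h, if_pos h, mul_one]
    · rw [if_neg h, if_neg h, mul_zero]
  unfold tvDist
  rw [div_le_iff₀ (by norm_num : (0:ℝ) < 2)]
  have hstep : ∀ c : Fin q, |marginalAt μ u c - marginalAt ν u c|
      ≤ ∑ p : (V → Fin q) × (V → Fin q),
          π p * |(if p.1 u = c then (1:ℝ) else 0) - (if p.2 u = c then (1:ℝ) else 0)| := by
    intro c
    rw [hmargμ c, hmargν c, ← Finset.sum_sub_distrib]
    refine (Finset.abs_sum_le_sum_abs _ _).trans (le_of_eq ?_)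
    refine Finset.sum_congr rfl fun p _ => ?_
    rw [← mul_sub, abs_mul, abs_of_nonneg (hπ.1 p)]
  calc (∑ c : Fin q, |marginalAt μ u c - marginalAt ν u c|)
      ≤ ∑ c : Fin q, ∑ p : (V → Fin q) × (V → Fin q),
          π p * |(if p.1 u = c then (1:ℝ) else 0) - (if p.2 u = c then (1:ℝ) else 0)| :=
        Finset.sum_le_sum fun c _ => hstep c
    _ = ∑ p : (V → Fin q) × (V → Fin q), π p *
          ∑ c : Fin q, |(if p.1 u = c then (1:ℝ) else 0) - (if p.2 u = c then (1:ℝ) else 0)| := by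
        rw [Finset.sum_comm]
        exact Finset.sum_congr rfl fun p _ => (Finset.mul_sum _ _ _).symm
    _ ≤ (∑ p : (V → Fin q) × (V → Fin q), π p * (if p.1 u ≠ p.2 u then (1:ℝ) else 0)) * 2 := by
        rw [Finset.sum_mul]
        refine Finset.sum_le_sum fun p _ => ?_
        rw [mul_assoc]
        refine mul_le_mul_of_nonneg_left ?_ (hπ.1 p)
        by_cases h : p.1 u = p.2 u
        · rw [if_neg (by simpa using h), zero_mul]
          refine Finset.sum_nonpos fun c _ => ?_
          rw [h]
          simp
        · rw [if_pos h, one_mul]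
          have hsum : ∀ c : Fin q,
              |(if p.1 u = c then (1:ℝ) else 0) - (if p.2 u = c then (1:ℝ) else 0)|
                ≤ (if p.1 u = c then (1:ℝ) else 0) + (if p.2 u = c then (1:ℝ) else 0) := by
            intro c
            rw [abs_sub_le_iff]
            constructor <;> [skip; skip] <;>
              · by_cases h1 : p.1 u = c <;> by_cases h2 : p.2 u = c <;>
                  simp [h1, h2] <;> norm_num
          calc (∑ c : Fin q, |(if p.1 u = c then (1:ℝ) else 0) - (if p.2 u = c then (1:ℝ) else 0)|)
              ≤ ∑ c : Fin q, ((if p.1 u = c then (1:ℝ) else 0) + (if p.2 u = c then (1:ℝ) else 0)) :=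
                Finset.sum_le_sum fun c _ => hsum c
            _ = 2 := by
                rw [Finset.sum_add_distrib, Finset.sum_ite_eq Finset.univ (p.1 u) (fun _ => (1:ℝ)),
                  Finset.sum_ite_eq Finset.univ (p.2 u) (fun _ => (1:ℝ))]
                simp only [Finset.mem_univ, if_pos]
                norm_num

/-- convexity of tv distance of marginals over a coupling, after extending the pinning. -/
lemma tvDist_marginal_convex (hAEnn : ∀ i j, 0 ≤ AE i j) (hAVnn : ∀ i, 0 ≤ AV i)
    (hperm : Permissive G AE AV) {Λ Λ' : Finset V} (hΛ : Λ ⊆ Λ') {σ τ : V → Fin q}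
    {π : ((V → Fin q) × (V → Fin q)) → ℝ}
    (hπ : IsCoupling π (condDist G AE AV Λ σ) (condDist G AE AV Λ τ)) (u : V) :
    tvDist (marginalAt (condDist G AE AV Λ σ) u) (marginalAt (condDist G AE AV Λ τ) u)
      ≤ ∑ p : (V → Fin q) × (V → Fin q), π p *
          tvDist (marginalAt (condDist G AE AV Λ' p.1) u)
                 (marginalAt (condDist G AE AV Λ' p.2) u) := by
  have hmargσ : ∀ c, marginalAt (condDist G AE AV Λ σ) u c
      = ∑ p : (V → Fin q) × (V → Fin q), π p * marginalAt (condDist G AE AV Λ' p.1) u c := by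
    intro c
    rw [marginalAt_tower G AE AV hAEnn hAVnn hperm hΛ σ u c, Fintype.sum_prod_type]
    refine Finset.sum_congr rfl fun x _ => ?_
    dsimp only
    rw [← Finset.sum_mul, hπ.2.1 x]
  have hmargτ : ∀ c, marginalAt (condDist G AE AV Λ τ) u c
      = ∑ p : (V → Fin q) × (V → Fin q), π p * marginalAt (condDist G AE AV Λ' p.2) u c := by
    intro c
    rw [marginalAt_tower G AE AV hAEnn hAVnn hperm hΛ τ u c, Fintype.sum_prod_type_right]
    refine Finset.sum_congr rfl fun y _ => ?_
    dsimp only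
    rw [← Finset.sum_mul, hπ.2.2 y]
  unfold tvDist
  have hconv : ∀ p : (V → Fin q) × (V → Fin q), π p *
      ((∑ c : Fin q, |marginalAt (condDist G AE AV Λ' p.1) u c
        - marginalAt (condDist G AE AV Λ' p.2) u c|) / 2)
      = (∑ c : Fin q, π p * |marginalAt (condDist G AE AV Λ' p.1) u c
        - marginalAt (condDist G AE AV Λ' p.2) u c|) / 2 := by
    intro p
    rw [← mul_div_assoc, Finset.mul_sum]
  rw [Finset.sum_congr rfl fun p _ => hconv p, ← Finset.sum_div,
    div_le_div_iff_of_pos_right (by norm_num : (0:ℝ) < 2)]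
  conv_rhs => rw [Finset.sum_comm]
  refine Finset.sum_le_sum fun c _ => ?_
  rw [hmargσ c, hmargτ c, ← Finset.sum_sub_distrib]
  refine (Finset.abs_sum_le_sum_abs _ _).trans (le_of_eq ?_)
  refine Finset.sum_congr rfl fun p _ => ?_
  rw [← mul_sub, abs_mul, abs_of_nonneg (hπ.1 p)]

lemma dist_le_dist_add_one {a b : V} (h : G.Reachable v a) (hab : G.Adj a b) :
    G.dist v b ≤ G.dist v a + 1 := by
  obtain ⟨p, hp⟩ := h.exists_walk_length_eq_dist
  have h2 := SimpleGraph.dist_le (p.concat hab)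
  rwa [SimpleGraph.Walk.length_concat, hp] at h2

lemma dist_triangle' {a b c : V} (h1 : G.Reachable a b) (h2 : G.Reachable b c) :
    G.dist a c ≤ G.dist a b + G.dist b c := by
  obtain ⟨p, hp⟩ := h1.exists_walk_length_eq_dist
  obtain ⟨r, hr⟩ := h2.exists_walk_length_eq_dist
  have h3 := SimpleGraph.dist_le (p.append r)
  rwa [SimpleGraph.Walk.length_append, hp, hr] at h3

lemma adj_of_mem_edge {e : Sym2 V} {a b : V} (he : e ∈ G.edgeSet) (ha : a ∈ e)
    (hb : b ∈ e) (hne : a ≠ b) : G.Adj a b := by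
  induction e using Sym2.ind with
  | _ x y =>
    rw [Sym2.mem_iff] at ha hb
    rw [SimpleGraph.mem_edgeSet] at he
    rcases ha with rfl | rfl <;> rcases hb with rfl | rfl
    · exact absurd rfl hne
    · exact he
    · exact he.symm
    · exact absurd rfl hne

/-- generic factorization of a sum over configurations into inside/outside parts. -/
lemma sum_split (P : V → Prop) (F Gf : (V → Fin q) → ℝ) (g : V → Fin q)
    (hF : ∀ t t' : V → Fin q, (∀ w, P w → t w = t' w) → F t = F t')
    (hG : ∀ t t' : V → Fin q, (∀ w, ¬P w → t w = t' w) → Gf t = Gf t') :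
    ∑ t : V → Fin q, F t * Gf t
      = (∑ ρ : {w // P w} → Fin q, F (fun w => if h : P w then ρ ⟨w, h⟩ else g w))
        * ∑ θ : {w // ¬P w} → Fin q, Gf (fun w => if h : ¬P w then θ ⟨w, h⟩ else g w) := by
  classical
  rw [← Equiv.sum_comp (Equiv.piEquivPiSubtypeProd P (fun _ : V => Fin q)).symm
    (fun t => F t * Gf t), Fintype.sum_prod_type, Finset.sum_mul_sum]
  refine Finset.sum_congr rfl fun ρ _ => Finset.sum_congr rfl fun θ _ => ?_
  have happ : ∀ w, (Equiv.piEquivPiSubtypeProd P (fun _ : V => Fin q)).symm (ρ, θ) w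
      = if h : P w then ρ ⟨w, h⟩ else θ ⟨w, h⟩ := fun w => rfl
  congr 1
  · refine hF _ _ fun w hw => ?_
    rw [happ w, dif_pos hw, dif_pos hw]
  · refine hG _ _ fun w hw => ?_
    rw [happ w, dif_neg hw, dif_pos hw]

/-- the inside predicate for the Markov argument. -/
def insideP (G : SimpleGraph V) (v : V) (k : ℕ) (Λ' : Finset V) : V → Prop :=
  fun w => (G.Reachable v w ∧ G.dist v w ≤ k) ∧ w ∉ Λ'

def WIn (G : SimpleGraph V) (AE : Fin q → Fin q → ℝ) (AV : Fin q → ℝ)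
    (v : V) (k : ℕ) (Λ' : Finset V) (g t : V → Fin q) : ℝ :=
  (∏ w ∈ Finset.univ.filter (insideP G v k Λ'), AV (t w)) *
    ∏ e ∈ Finset.univ.filter (fun e : Sym2 V =>
        (e ∈ G.edgeSet ∧ ¬∀ x ∈ e, x ∈ Λ') ∧ ∃ x ∈ e, insideP G v k Λ' x),
      edgeFactor AE (fun w => if insideP G v k Λ' w then t w else g w) e

def WOut (G : SimpleGraph V) (AE : Fin q → Fin q → ℝ) (AV : Fin q → ℝ)
    (v : V) (k : ℕ) (Λ' : Finset V) (g t : V → Fin q) : ℝ :=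
  (if ∀ w ∈ Λ', t w = g w then (1:ℝ) else 0) *
    ((∏ w ∈ Λ'ᶜ.filter (fun w => ¬ insideP G v k Λ' w), AV (t w)) *
      ∏ e ∈ Finset.univ.filter (fun e : Sym2 V =>
          (e ∈ G.edgeSet ∧ ¬∀ x ∈ e, x ∈ Λ') ∧ ¬∃ x ∈ e, insideP G v k Λ' x),
        edgeFactor AE t e)

lemma WIn_nonneg (hAEnn : ∀ i j, 0 ≤ AE i j) (hAVnn : ∀ i, 0 ≤ AV i)
    (v : V) (k : ℕ) (Λ' : Finset V) (g t : V → Fin q) : 0 ≤ WIn G AE AV v k Λ' g t :=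
  mul_nonneg (Finset.prod_nonneg fun w _ => hAVnn _)
    (Finset.prod_nonneg fun e _ => edgeFactor_nonneg AE hAEnn _ e)

lemma WOut_nonneg (hAEnn : ∀ i j, 0 ≤ AE i j) (hAVnn : ∀ i, 0 ≤ AV i)
    (v : V) (k : ℕ) (Λ' : Finset V) (g t : V → Fin q) : 0 ≤ WOut G AE AV v k Λ' g t := by
  refine mul_nonneg (by positivity) (mul_nonneg (Finset.prod_nonneg fun w _ => hAVnn _)
    (Finset.prod_nonneg fun e _ => edgeFactor_nonneg AE hAEnn _ e))

lemma WIn_congr {v : V} {k : ℕ} {Λ' : Finset V} (g : V → Fin q) {t t' : V → Fin q}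
    (h : ∀ w, insideP G v k Λ' w → t w = t' w) :
    WIn G AE AV v k Λ' g t = WIn G AE AV v k Λ' g t' := by
  unfold WIn
  congr 1
  · exact Finset.prod_congr rfl fun w hw => by rw [h w (Finset.mem_filter.mp hw).2]
  · refine Finset.prod_congr rfl fun e _ => edgeFactor_congr AE fun w _ => ?_
    by_cases hw : insideP G v k Λ' w
    · rw [if_pos hw, if_pos hw, h w hw]
    · rw [if_neg hw, if_neg hw]

lemma WOut_congr {v : V} {k : ℕ} {Λ' : Finset V} (g : V → Fin q) {t t' : V → Fin q}
    (hΛP : ∀ w ∈ Λ', ¬ insideP G v k Λ' w)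
    (h : ∀ w, ¬ insideP G v k Λ' w → t w = t' w) :
    WOut G AE AV v k Λ' g t = WOut G AE AV v k Λ' g t' := by
  unfold WOut
  congr 1
  · by_cases hh : ∀ w ∈ Λ', t w = g w
    · rw [if_pos hh, if_pos (fun w hw => ((h w (hΛP w hw)).symm).trans (hh w hw))]
    · rw [if_neg hh, if_neg (fun hh' : ∀ w ∈ Λ', t' w = g w =>
        hh fun w hw => (h w (hΛP w hw)).trans (hh' w hw))]
  congr 1
  · exact Finset.prod_congr rfl fun w hw => by rw [h w (Finset.mem_filter.mp hw).2]
  · refine Finset.prod_congr rfl fun e he => edgeFactor_congr AE fun w hwe => ?_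
    simp only [Finset.mem_filter, Finset.mem_univ, true_and] at he
    exact h w fun hP => he.2 ⟨w, hwe, hP⟩

/-- the conditional weight factorizes across the separating sphere. -/
lemma condWeight_factor (hperm : Permissive G AE AV)
    {v : V} {k : ℕ} (hk : 1 ≤ k) {Λ' : Finset V}
    (hS : sphere G v k ⊆ Λ') (hvΛ : v ∈ Λ') (g t : V → Fin q) :
    condWeight G AE AV Λ' g t = WIn G AE AV v k Λ' g t * WOut G AE AV v k Λ' g t := by
  by_cases hind : ∀ w ∈ Λ', t w = g w
  case neg =>
    unfold condWeight WOut
    rw [if_neg hind]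
    ring
  case pos =>
  have hPlt : ∀ w, insideP G v k Λ' w → G.dist v w < k := by
    intro w hw
    rcases Nat.lt_or_ge (G.dist v w) k with h | h
    · exact h
    · exact absurd (hS (Finset.mem_filter.mpr ⟨Finset.mem_univ w,
        hw.1.1, le_antisymm hw.1.2 h⟩)) hw.2
  have hE1end : ∀ e : Sym2 V, e ∈ G.edgeSet → (∃ x ∈ e, insideP G v k Λ' x) →
      ∀ x ∈ e, insideP G v k Λ' x ∨ x ∈ Λ' := by
    intro e he hex x hx
    by_cases hxΛ : x ∈ Λ'
    · exact Or.inr hxΛ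
    obtain ⟨y, hy, hyP⟩ := hex
    by_cases hxy : x = y
    · exact Or.inl (hxy ▸ hyP)
    have hadj : G.Adj y x := adj_of_mem_edge G he hy hx (fun h => hxy h.symm)
    refine Or.inl ⟨⟨hyP.1.1.trans hadj.reachable, ?_⟩, hxΛ⟩
    calc G.dist v x ≤ G.dist v y + 1 := dist_le_dist_add_one G hyP.1.1 hadj
      _ ≤ k := Nat.succ_le_of_lt (hPlt y hyP)
  unfold condWeight WIn WOut
  rw [if_pos hind]
  -- vertex split
  have hvsplit : (Λ'ᶜ : Finset V)
      = Finset.univ.filter (insideP G v k Λ')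
        ∪ Λ'ᶜ.filter (fun w => ¬ insideP G v k Λ' w) := by
    ext w
    simp only [Finset.mem_compl, Finset.mem_union, Finset.mem_filter, Finset.mem_univ, true_and]
    constructor
    · intro hw
      by_cases h' : insideP G v k Λ' w
      · exact Or.inl h'
      · exact Or.inr ⟨hw, h'⟩
    · rintro (hw | ⟨hw, _⟩)
      · exact hw.2
      · exact hw
  have hvdisj : Disjoint (Finset.univ.filter (insideP G v k Λ'))
      (Λ'ᶜ.filter (fun w => ¬ insideP G v k Λ' w)) := by
    rw [Finset.disjoint_right]
    intro a ha ha'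
    exact (Finset.mem_filter.mp ha).2 (Finset.mem_filter.mp ha').2
  -- edge split
  have hesplit : Finset.univ.filter (fun e : Sym2 V => e ∈ G.edgeSet ∧ ¬ ∀ x ∈ e, x ∈ Λ')
      = Finset.univ.filter (fun e : Sym2 V =>
          (e ∈ G.edgeSet ∧ ¬∀ x ∈ e, x ∈ Λ') ∧ ∃ x ∈ e, insideP G v k Λ' x)
        ∪ Finset.univ.filter (fun e : Sym2 V =>
          (e ∈ G.edgeSet ∧ ¬∀ x ∈ e, x ∈ Λ') ∧ ¬∃ x ∈ e, insideP G v k Λ' x) := by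
    ext e
    simp only [Finset.mem_union, Finset.mem_filter, Finset.mem_univ, true_and]
    constructor
    · intro he
      by_cases h' : ∃ x ∈ e, insideP G v k Λ' x
      · exact Or.inl ⟨he, h'⟩
      · exact Or.inr ⟨he, h'⟩
    · rintro (⟨he, _⟩ | ⟨he, _⟩) <;> exact he
  have hedisj : Disjoint (Finset.univ.filter (fun e : Sym2 V =>
          (e ∈ G.edgeSet ∧ ¬∀ x ∈ e, x ∈ Λ') ∧ ∃ x ∈ e, insideP G v k Λ' x))
      (Finset.univ.filter (fun e : Sym2 V =>
          (e ∈ G.edgeSet ∧ ¬∀ x ∈ e, x ∈ Λ') ∧ ¬∃ x ∈ e, insideP G v k Λ' x)) := by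
    rw [Finset.disjoint_right]
    intro e he he'
    simp only [Finset.mem_filter] at he he'
    exact he.2.2 he'.2.2
  have hv : (∏ w ∈ (Λ'ᶜ : Finset V), AV (t w))
      = (∏ w ∈ Finset.univ.filter (insideP G v k Λ'), AV (t w))
        * ∏ w ∈ Λ'ᶜ.filter (fun w => ¬ insideP G v k Λ' w), AV (t w) := by
    conv_lhs => rw [hvsplit]
    exact Finset.prod_union hvdisj
  have he : (∏ e ∈ Finset.univ.filter
        (fun e : Sym2 V => e ∈ G.edgeSet ∧ ¬ ∀ x ∈ e, x ∈ Λ'), edgeFactor AE t e)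
      = (∏ e ∈ Finset.univ.filter (fun e : Sym2 V =>
          (e ∈ G.edgeSet ∧ ¬∀ x ∈ e, x ∈ Λ') ∧ ∃ x ∈ e, insideP G v k Λ' x),
          edgeFactor AE t e)
        * ∏ e ∈ Finset.univ.filter (fun e : Sym2 V =>
          (e ∈ G.edgeSet ∧ ¬∀ x ∈ e, x ∈ Λ') ∧ ¬∃ x ∈ e, insideP G v k Λ' x),
          edgeFactor AE t e := by
    conv_lhs => rw [hesplit]
    exact Finset.prod_union hedisj
  have hE1 : (∏ e ∈ Finset.univ.filter (fun e : Sym2 V =>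
        (e ∈ G.edgeSet ∧ ¬∀ x ∈ e, x ∈ Λ') ∧ ∃ x ∈ e, insideP G v k Λ' x),
      edgeFactor AE t e)
      = ∏ e ∈ Finset.univ.filter (fun e : Sym2 V =>
        (e ∈ G.edgeSet ∧ ¬∀ x ∈ e, x ∈ Λ') ∧ ∃ x ∈ e, insideP G v k Λ' x),
      edgeFactor AE (fun w => if insideP G v k Λ' w then t w else g w) e := by
    refine Finset.prod_congr rfl fun e he => edgeFactor_congr AE fun w hw => ?_
    simp only [Finset.mem_filter, Finset.mem_univ, true_and] at he
    rcases hE1end e he.1.1 he.2 w hw with hP | hΛ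
    · rw [if_pos hP]
    · by_cases hP : insideP G v k Λ' w
      · rw [if_pos hP]
      · rw [if_neg hP, hind w hΛ]
  rw [hv, he, hE1]
  ring

/-- no edge counted in the outside part contains `v`. -/
lemma E2_not_mem_v {v : V} {k : ℕ} (hk : 1 ≤ k) {Λ' : Finset V} (hvΛ : v ∈ Λ')
    {e : Sym2 V} (he : e ∈ G.edgeSet) (hne : ¬ ∀ x ∈ e, x ∈ Λ')
    (hex : ¬ ∃ x ∈ e, insideP G v k Λ' x) : v ∉ e := by
  intro hv
  push_neg at hne
  obtain ⟨x, hx, hxΛ⟩ := hne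
  have hxv : x ≠ v := fun h => hxΛ (h ▸ hvΛ)
  have hadj : G.Adj v x := adj_of_mem_edge G he hv hx (fun h => hxv h.symm)
  refine hex ⟨x, hx, ⟨⟨hadj.reachable, ?_⟩, hxΛ⟩⟩
  calc G.dist v x ≤ G.dist v v + 1 := dist_le_dist_add_one G (SimpleGraph.Reachable.refl v) hadj
    _ = 1 := by rw [SimpleGraph.dist_self]
    _ ≤ k := hk

lemma markov_step (hAEnn : ∀ i j, 0 ≤ AE i j) (hAVnn : ∀ i, 0 ≤ AV i)
    (hperm : Permissive G AE AV)
    {v u : V} {k : ℕ} (hk : 1 ≤ k) {Λ' : Finset V}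
    (hS : sphere G v k ⊆ Λ') (hvΛ : v ∈ Λ')
    {σ' τ' : V → Fin q} (hd : ∀ w, w ≠ v → σ' w = τ' w)
    (hu : ∀ _ : G.Reachable v u, k < G.dist v u) (c : Fin q) :
    marginalAt (condDist G AE AV Λ' σ') u c = marginalAt (condDist G AE AV Λ' τ') u c := by
  classical
  have hune : u ≠ v := by
    intro h
    subst h
    have := hu (SimpleGraph.Reachable.refl u)
    rw [SimpleGraph.dist_self] at this
    omega
  have hPu : ¬ insideP G v k Λ' u := by
    rintro ⟨⟨hr, hdist⟩, -⟩
    exact absurd (hu hr) (by omega)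
  have hPv : ¬ insideP G v k Λ' v := fun h => h.2 hvΛ
  have hΛP : ∀ w ∈ Λ', ¬ insideP G v k Λ' w := fun w hw h => h.2 hw
  -- factorized marginal formula
  have key : ∀ g : V → Fin q, ∀ X : Fin q → ℝ,
      (∑ t : V → Fin q, condWeight G AE AV Λ' g t * X (t u))
        = (∑ ρ : {w // insideP G v k Λ' w} → Fin q,
            WIn G AE AV v k Λ' g (fun w => if h : insideP G v k Λ' w then ρ ⟨w, h⟩ else g w))
          * ∑ θ : {w // ¬ insideP G v k Λ' w} → Fin q,
              WOut G AE AV v k Λ' g (fun w => if h : ¬ insideP G v k Λ' w then θ ⟨w, h⟩ else g w)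
              * X ((fun w => if h : ¬ insideP G v k Λ' w then θ ⟨w, h⟩ else g w) u) := by
    intro g X
    rw [Finset.sum_congr rfl fun t _ => by
      rw [condWeight_factor G AE AV hperm hk hS hvΛ g t, mul_assoc]]
    exact sum_split _ (WIn G AE AV v k Λ' g) (fun t => WOut G AE AV v k Λ' g t * X (t u)) g
      (fun t t' h => WIn_congr G AE AV g h)
      (fun t t' h => by
        rw [WOut_congr G AE AV g hΛP h, h u hPu])
  -- marginal as a ratio of factorized sums
  have hmar : ∀ g : V → Fin q,
      marginalAt (condDist G AE AV Λ' g) u c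
        = (∑ t : V → Fin q, condWeight G AE AV Λ' g t * (if t u = c then (1:ℝ) else 0))
            / condZ G AE AV Λ' g := by
    intro g
    unfold marginalAt condDist
    have hpt : ∀ t : V → Fin q,
        (if t u = c then condWeight G AE AV Λ' g t / condZ G AE AV Λ' g else 0)
          = condWeight G AE AV Λ' g t * (if t u = c then (1:ℝ) else 0) / condZ G AE AV Λ' g := by
      intro t
      by_cases h : t u = c
      · rw [if_pos h, if_pos h, mul_one]
      · rw [if_neg h, if_neg h, mul_zero, zero_div]
    rw [Finset.sum_congr rfl fun t _ => hpt t, ← Finset.sum_div]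
  have hZ : ∀ g : V → Fin q, condZ G AE AV Λ' g
      = ∑ t : V → Fin q, condWeight G AE AV Λ' g t * (1 : ℝ) := by
    intro g
    unfold condZ
    exact Finset.sum_congr rfl fun t _ => (mul_one _).symm
  -- names for the factor sums
  set SI : (V → Fin q) → ℝ := fun g => ∑ ρ : {w // insideP G v k Λ' w} → Fin q,
      WIn G AE AV v k Λ' g (fun w => if h : insideP G v k Λ' w then ρ ⟨w, h⟩ else g w) with hSI
  set NX : (V → Fin q) → (Fin q → ℝ) → ℝ := fun g X =>
      ∑ θ : {w // ¬ insideP G v k Λ' w} → Fin q,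
        WOut G AE AV v k Λ' g (fun w => if h : ¬ insideP G v k Λ' w then θ ⟨w, h⟩ else g w)
          * X ((fun w => if h : ¬ insideP G v k Λ' w then θ ⟨w, h⟩ else g w) u) with hNX
  -- swap invariance of the outside sums
  have hswap : ∀ X : Fin q → ℝ, NX σ' X = NX τ' X := by
    intro X
    rw [hNX]
    have hPvf : ¬ insideP G v k Λ' v := hPv
    set v' : {w // ¬ insideP G v k Λ' w} := ⟨v, hPvf⟩ with hv'
    set ee : ({w // ¬ insideP G v k Λ' w} → Fin q) ≃ ({w // ¬ insideP G v k Λ' w} → Fin q) :=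
      Equiv.piCongrRight (fun w => if w = v' then Equiv.swap (σ' v) (τ' v) else Equiv.refl _)
      with hee
    refine Fintype.sum_bijective ee ee.bijective _ _ fun θ => ?_
    have heeapp : ∀ w : {w // ¬ insideP G v k Λ' w}, ee θ w
        = if w = v' then Equiv.swap (σ' v) (τ' v) (θ w) else θ w := by
      intro w
      rw [hee]
      by_cases h : w = v'
      · simp [Equiv.piCongrRight, h]
      · simp [Equiv.piCongrRight, h]
    set Eσ : V → Fin q := fun w => if h : ¬ insideP G v k Λ' w then θ ⟨w, h⟩ else σ' w with hEσ
    set Eτ : V → Fin q := fun w => if h : ¬ insideP G v k Λ' w then (ee θ) ⟨w, h⟩ else τ' w with hEτ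
    have hEne : ∀ w, w ≠ v → Eσ w = Eτ w := by
      intro w hw
      simp only [hEσ, hEτ]
      by_cases h : ¬ insideP G v k Λ' w
      · rw [dif_pos h, dif_pos h, heeapp, if_neg (fun hc => hw (congrArg Subtype.val hc))]
      · rw [dif_neg h, dif_neg h]
        exact hd w hw
    have hEv : Eτ v = Equiv.swap (σ' v) (τ' v) (Eσ v) := by
      simp only [hEσ, hEτ]
      rw [dif_pos hPvf, dif_pos hPvf, heeapp ⟨v, hPvf⟩, if_pos rfl]
    show WOut G AE AV v k Λ' σ' Eσ * X (Eσ u) = WOut G AE AV v k Λ' τ' Eτ * X (Eτ u)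
    have hXu : X (Eσ u) = X (Eτ u) := by rw [hEne u hune]
    rw [hXu]
    congr 1
    -- WOut equality
    unfold WOut
    have hind : (∀ w ∈ Λ', Eσ w = σ' w) ↔ (∀ w ∈ Λ', Eτ w = τ' w) := by
      constructor
      · intro hh w hw
        by_cases hwv : w = v
        · rw [hwv, hEv, hh v (hwv ▸ hw), Equiv.swap_apply_left]
        · rw [← hEne w hwv, hh w hw, hd w hwv]
      · intro hh w hw
        by_cases hwv : w = v
        · rw [hwv]
          have h2 := hh v (hwv ▸ hw)
          rw [hEv] at h2
          have h3 := congrArg (Equiv.swap (σ' v) (τ' v)) h2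
          rwa [Equiv.swap_apply_self, Equiv.swap_apply_right] at h3
        · rw [hEne w hwv, hh w hw, hd w hwv]
    congr 1
    · by_cases hh : ∀ w ∈ Λ', Eσ w = σ' w
      · rw [if_pos hh, if_pos (hind.mp hh)]
      · rw [if_neg hh, if_neg (fun hc => hh (hind.mpr hc))]
    congr 1
    · refine Finset.prod_congr rfl fun w hw => ?_
      have hwv : w ≠ v := by
        intro h
        exact (Finset.mem_compl.mp (Finset.mem_filter.mp hw).1) (h ▸ hvΛ)
      rw [hEne w hwv]
    · refine Finset.prod_congr rfl fun e he => edgeFactor_congr AE fun w hwe => ?_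
      simp only [Finset.mem_filter, Finset.mem_univ, true_and] at he
      have hwv : w ≠ v := by
        intro h
        subst h
        exact E2_not_mem_v G hk hvΛ he.1.1 he.1.2 he.2 hwe
      exact hEne w hwv
  -- positivity of the inside sums
  have hSInn : ∀ g, 0 ≤ SI g := fun g =>
    Finset.sum_nonneg fun ρ _ => WIn_nonneg G AE AV hAEnn hAVnn v k Λ' g _
  have hNXnn : ∀ g, 0 ≤ NX g (fun _ => (1:ℝ)) := fun g =>
    Finset.sum_nonneg fun θ _ => mul_nonneg (WOut_nonneg G AE AV hAEnn hAVnn v k Λ' g _)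
      (by norm_num)
  have hZfac : ∀ g, condZ G AE AV Λ' g = SI g * NX g (fun _ => (1:ℝ)) := by
    intro g
    rw [hZ g, key g (fun _ => (1:ℝ))]
  have hSIpos : ∀ g : V → Fin q, 0 < SI g ∧ 0 < NX g (fun _ => (1:ℝ)) := by
    intro g
    have hZpos := hperm Λ' g
    rw [hZfac g] at hZpos
    rcases (hSInn g).lt_or_eq with h | h
    · refine ⟨h, ?_⟩
      rcases (hNXnn g).lt_or_eq with h2 | h2
      · exact h2
      · rw [← h2, mul_zero] at hZpos
        exact absurd hZpos (lt_irrefl 0)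
    · rw [← h, zero_mul] at hZpos
      exact absurd hZpos (lt_irrefl 0)
  -- conclude
  have hXc : ∀ g : V → Fin q, marginalAt (condDist G AE AV Λ' g) u c
      = SI g * NX g (fun d => if d = c then (1:ℝ) else 0) / (SI g * NX g (fun _ => (1:ℝ))) := by
    intro g
    rw [hmar g, hZfac g]
    congr 1
    rw [key g (fun d => if d = c then (1:ℝ) else 0)]
  rw [hXc σ', hXc τ', hswap (fun d => if d = c then (1:ℝ) else 0), hswap (fun _ => (1:ℝ)),
    mul_div_mul_left _ _ (hSIpos σ').1.ne', mul_div_mul_left _ _ (hSIpos τ').1.ne']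

/-- vertices at distance at least `m` from `v` (among those reachable from `v`). -/
def far (G : SimpleGraph V) (v : V) (m : ℕ) : Finset V :=
  Finset.univ.filter (fun u => G.Reachable v u ∧ m ≤ G.dist v u)

lemma sphere_subset_far (v : V) (m : ℕ) : sphere G v m ⊆ far G v m := by
  intro u hu
  rw [sphere, Finset.mem_filter] at hu
  exact Finset.mem_filter.mpr ⟨Finset.mem_univ u, hu.2.1, hu.2.2.ge⟩

lemma far_subset_far {v w : V} {m k : ℕ} (hw : w ∈ sphere G v k) :
    far G v m ⊆ far G w (m - k) := by
  intro u hu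
  rw [far, Finset.mem_filter] at hu
  rw [sphere, Finset.mem_filter] at hw
  refine Finset.mem_filter.mpr ⟨Finset.mem_univ u, hw.2.1.symm.trans hu.2.1, ?_⟩
  have htri := dist_triangle' G hw.2.1 (hw.2.1.symm.trans hu.2.1)
  rw [hw.2.2] at htri
  have h2 := hu.2.2
  omega

/-- path-coupling chain bound: pinned configurations differing on a set
inside `D₀` have far influence bounded by the sum of one-vertex influences. -/
lemma chain (Λ' : Finset V) (U : Finset V) (J : V → ℝ) (hJnn : ∀ w, 0 ≤ J w)
    (D₀ : Finset V)
    (hbound : ∀ w ∈ D₀, ∀ (z : V → Fin q) (cc : Fin q), cc ≠ z w →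
      ∑ u ∈ U, tvDist (marginalAt (condDist G AE AV Λ' z) u)
        (marginalAt (condDist G AE AV Λ' (Function.update z w cc)) u) ≤ J w) :
    ∀ (n : ℕ) (x y : V → Fin q), (Λ'.filter (fun w => x w ≠ y w)).card = n →
      (Λ'.filter (fun w => x w ≠ y w)) ⊆ D₀ →
      ∑ u ∈ U, tvDist (marginalAt (condDist G AE AV Λ' x) u)
          (marginalAt (condDist G AE AV Λ' y) u)
        ≤ ∑ w ∈ Λ'.filter (fun w => x w ≠ y w), J w := by
  intro n
  induction n with
  | zero =>
    intro x y hcard _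
    have hxy : condDist G AE AV Λ' x = condDist G AE AV Λ' y := by
      refine condDist_pin_congr G AE AV fun w hw => ?_
      by_contra hne
      have : w ∈ Λ'.filter (fun w => x w ≠ y w) := Finset.mem_filter.mpr ⟨hw, hne⟩
      rw [Finset.card_eq_zero.mp hcard] at this
      exact absurd this (Finset.notMem_empty w)
    rw [hxy]
    have h0 : ∑ u ∈ U, tvDist (marginalAt (condDist G AE AV Λ' y) u)
        (marginalAt (condDist G AE AV Λ' y) u) = 0 := by
      refine Finset.sum_eq_zero fun u _ => ?_
      unfold tvDist
      simp
    rw [h0]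
    exact Finset.sum_nonneg fun w _ => hJnn w
  | succ n ih =>
    intro x y hcard hsub
    obtain ⟨w, hw⟩ := Finset.card_pos.mp (by rw [hcard]; exact Nat.succ_pos n)
    have hwΛ : w ∈ Λ' := (Finset.mem_filter.mp hw).1
    have hwne : x w ≠ y w := (Finset.mem_filter.mp hw).2
    set x' := Function.update x w (y w) with hx'
    have hfilter : Λ'.filter (fun w' => x' w' ≠ y w') = (Λ'.filter (fun w' => x w' ≠ y w')).erase w := by
      ext w'
      rw [Finset.mem_erase, Finset.mem_filter, Finset.mem_filter]
      constructor
      · intro ⟨h1, h2⟩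
        have hne : w' ≠ w := by
          intro h
          subst h
          rw [hx', Function.update_self] at h2
          exact h2 rfl
        rw [hx', Function.update_of_ne hne] at h2
        exact ⟨hne, h1, h2⟩
      · intro ⟨hne, h1, h2⟩
        rw [hx', Function.update_of_ne hne]
        exact ⟨h1, h2⟩
    have hstep : ∑ u ∈ U, tvDist (marginalAt (condDist G AE AV Λ' x) u)
        (marginalAt (condDist G AE AV Λ' x') u) ≤ J w := by
      refine hbound w (hsub hw) x (y w) (fun h => hwne h.symm)
    have hrest := ih x' y (by rw [hfilter, Finset.card_erase_of_mem hw, hcard]; rfl)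
      (by rw [hfilter]; exact (Finset.erase_subset w _).trans hsub)
    calc ∑ u ∈ U, tvDist (marginalAt (condDist G AE AV Λ' x) u)
          (marginalAt (condDist G AE AV Λ' y) u)
        ≤ ∑ u ∈ U, (tvDist (marginalAt (condDist G AE AV Λ' x) u)
              (marginalAt (condDist G AE AV Λ' x') u)
            + tvDist (marginalAt (condDist G AE AV Λ' x') u)
              (marginalAt (condDist G AE AV Λ' y) u)) :=
          Finset.sum_le_sum fun u _ => tvDist_triangle _ _ _
      _ = (∑ u ∈ U, tvDist (marginalAt (condDist G AE AV Λ' x) u)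
              (marginalAt (condDist G AE AV Λ' x') u))
          + ∑ u ∈ U, tvDist (marginalAt (condDist G AE AV Λ' x') u)
              (marginalAt (condDist G AE AV Λ' y) u) := Finset.sum_add_distrib
      _ ≤ J w + ∑ w' ∈ Λ'.filter (fun w' => x' w' ≠ y w'), J w' := add_le_add hstep hrest
      _ = ∑ w' ∈ Λ'.filter (fun w' => x w' ≠ y w'), J w' := by
          rw [hfilter]
          exact Finset.add_sum_erase _ J hw

lemma prod_coupling {μ ν : (V → Fin q) → ℝ} (hμnn : ∀ x, 0 ≤ μ x) (hνnn : ∀ x, 0 ≤ ν x)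
    (hμ : ∑ x : V → Fin q, μ x = 1) (hν : ∑ x : V → Fin q, ν x = 1) :
    IsCoupling (fun p : (V → Fin q) × (V → Fin q) => μ p.1 * ν p.2) μ ν := by
  refine ⟨fun p => mul_nonneg (hμnn p.1) (hνnn p.2), fun x => ?_, fun y => ?_⟩
  · dsimp only
    rw [← Finset.mul_sum, hν, mul_one]
  · dsimp only
    rw [← Finset.sum_mul, hμ, one_mul]

lemma cost_nonneg {π : ((V → Fin q) × (V → Fin q)) → ℝ} (hnn : ∀ p, 0 ≤ π p) :
    0 ≤ ∑ p : (V → Fin q) × (V → Fin q), π p * hamming p.1 p.2 :=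
  Finset.sum_nonneg fun p _ => mul_nonneg (hnn p) (by unfold hamming; positivity)

lemma exists_coupling_cost_lt {μ ν : (V → Fin q) → ℝ}
    (hμnn : ∀ x, 0 ≤ μ x) (hνnn : ∀ x, 0 ≤ ν x)
    (hμ : ∑ x : V → Fin q, μ x = 1) (hν : ∑ x : V → Fin q, ν x = 1)
    {C ε : ℝ} (hW : Wass hamming μ ν ≤ C) (hε : 0 < ε) :
    ∃ π : ((V → Fin q) × (V → Fin q)) → ℝ, IsCoupling π μ ν ∧
      ∑ p : (V → Fin q) × (V → Fin q), π p * hamming p.1 p.2 < C + ε := by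
  classical
  set S : Set ℝ := {c : ℝ | ∃ π : ((V → Fin q) × (V → Fin q)) → ℝ,
    IsCoupling π μ ν ∧ ∑ p : (V → Fin q) × (V → Fin q), π p * hamming p.1 p.2 = c} with hs
  have hne : S.Nonempty := ⟨_, ⟨_, prod_coupling hμnn hνnn hμ hν, rfl⟩⟩
  have hbdd : BddBelow S := by
    refine ⟨0, fun c hc => ?_⟩
    obtain ⟨π, hπ, hcost⟩ := hc
    rw [← hcost]
    exact cost_nonneg hπ.1
  have hlt : sInf S < C + ε := lt_of_le_of_lt hW (by linarith)
  obtain ⟨b, hb, hblt⟩ := (csInf_lt_iff hbdd hne).mp hlt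
  obtain ⟨π, hπ, hcost⟩ := hb
  exact ⟨π, hπ, by rw [hcost]; exact hblt⟩

/-- decomposition of the coupling cost as a sum of per-vertex disagreement probabilities. -/
lemma cost_eq_sum_disagree (π : ((V → Fin q) × (V → Fin q)) → ℝ) :
    ∑ p : (V → Fin q) × (V → Fin q), π p * hamming p.1 p.2
      = ∑ w : V, ∑ p : (V → Fin q) × (V → Fin q), π p * (if p.1 w ≠ p.2 w then (1:ℝ) else 0) := by
  rw [Finset.sum_comm]
  refine Finset.sum_congr rfl fun p _ => ?_
  rw [← Finset.mul_sum]
  congr 1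
  unfold hamming
  rw [Finset.sum_boole]

lemma one_le_C (hq : 2 ≤ q) (hAEnn : ∀ i j, 0 ≤ AE i j) (hAVnn : ∀ i, 0 ≤ AV i)
    (hperm : Permissive G AE AV) {C : ℝ} (hCI : CouplingIndependence G AE AV C) (v : V) :
    1 ≤ C := by
  classical
  set σ₀ : V → Fin q := fun _ => ⟨0, by omega⟩ with hσ₀
  set τ₀ : V → Fin q := fun _ => ⟨1, by omega⟩ with hτ₀
  have hdo : DifferOnlyAt {v} σ₀ τ₀ v := by
    refine ⟨Finset.mem_singleton_self v, by simp [hσ₀, hτ₀], fun u hu hne => ?_⟩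
    exact absurd (Finset.mem_singleton.mp hu) hne
  have hW := hCI {v} σ₀ τ₀ v hdo
  refine le_trans ?_ hW
  unfold Wass
  refine le_csInf ⟨_, ⟨_, prod_coupling
    (condDist_nonneg G AE AV hAEnn hAVnn hperm _ _)
    (condDist_nonneg G AE AV hAEnn hAVnn hperm _ _)
    (condDist_sum G AE AV hperm _ _) (condDist_sum G AE AV hperm _ _), rfl⟩⟩ ?_
  rintro b ⟨π, hπ, rfl⟩
  have hdis := coupling_pinned_disagree G AE AV hperm (Finset.mem_singleton_self v)
    (by simp [hσ₀, hτ₀] : σ₀ v ≠ τ₀ v) hπ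
  rw [← hdis]
  refine Finset.sum_le_sum fun p _ => ?_
  refine mul_le_mul_of_nonneg_left ?_ (hπ.1 p)
  by_cases h : p.1 v = p.2 v
  · rw [if_neg (by simpa using h)]
    unfold hamming
    positivity
  · rw [if_pos h]
    unfold hamming
    have : (1:ℝ) = ((1:ℕ):ℝ) := by norm_num
    rw [this]
    have hcard : 1 ≤ (Finset.univ.filter fun w => p.1 w ≠ p.2 w).card := by
      rw [Nat.one_le_iff_ne_zero, ← Nat.pos_iff_ne_zero, Finset.card_pos]
      exact ⟨v, Finset.mem_filter.mpr ⟨Finset.mem_univ v, h⟩⟩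
    exact_mod_cast hcard

lemma beta_sum_lower {C : ℝ} (hC : 1 ≤ C) {ℓ n : ℕ}
    (hn : (n : ℤ) = ⌈(ℓ:ℝ)/(2*C)⌉) (hn2 : 2 ≤ n) :
    (C - 1/2) * 2^n ≤ ∑ i ∈ Finset.Ico 1 ℓ, (2:ℝ)^((⌈(i:ℝ)/(2*C)⌉).toNat) := by
  have hC2 : (0:ℝ) < 2*C := by linarith
  have hceil : ((n:ℝ) - 1) < (ℓ:ℝ)/(2*C) := by
    have h1 : (⌈(ℓ:ℝ)/(2*C)⌉ : ℝ) < (ℓ:ℝ)/(2*C) + 1 := Int.ceil_lt_add_one _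
    rw [← hn] at h1
    push_cast at h1
    linarith
  have hlen : ∀ s : ℕ, s ≤ n - 1 → 2*C*(s:ℝ) < (ℓ:ℝ) := by
    intro s hs
    have hsr : (s:ℝ) ≤ (n:ℝ) - 1 := by
      have : (s:ℝ) ≤ ((n-1 : ℕ):ℝ) := by exact_mod_cast hs
      rw [Nat.cast_sub (by omega)] at this
      simpa using this
    calc 2*C*(s:ℝ) ≤ 2*C*((n:ℝ)-1) := by
          refine mul_le_mul_of_nonneg_left hsr (by linarith)
      _ < (ℓ:ℝ) := by
          rw [← lt_div_iff₀' hC2]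
          calc (n:ℝ) - 1 < (ℓ:ℝ)/(2*C) := hceil
            _ ≤ (ℓ:ℝ)/(2*C) := le_refl _
  set A : ℕ → Finset ℕ := fun s =>
    (Finset.Ico 1 ℓ).filter (fun i => (⌈(i:ℝ)/(2*C)⌉).toNat = s) with hA
  have hsub : ∀ s ∈ Finset.Ico 1 n,
      Finset.Ioc (⌊2*C*((s:ℝ)-1)⌋₊) (⌊2*C*(s:ℝ)⌋₊) ⊆ A s := by
    intro s hs i hi
    rw [Finset.mem_Ioc] at hi
    rw [Finset.mem_Ico] at hs
    have hs1 : 1 ≤ s := hs.1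
    have hfl : (0:ℝ) ≤ 2*C*((s:ℝ)-1) := by
      have : (1:ℝ) ≤ (s:ℝ) := by exact_mod_cast hs1
      nlinarith
    have hlow : 2*C*((s:ℝ)-1) < (i:ℝ) := by
      have h1 : 2*C*((s:ℝ)-1) < (⌊2*C*((s:ℝ)-1)⌋₊ : ℝ) + 1 := Nat.lt_floor_add_one _
      have h2 : ((⌊2*C*((s:ℝ)-1)⌋₊ : ℕ):ℝ) + 1 ≤ (i:ℝ) := by exact_mod_cast hi.1
      linarith
    have hhigh : (i:ℝ) ≤ 2*C*(s:ℝ) := by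
      calc (i:ℝ) ≤ (⌊2*C*(s:ℝ)⌋₊ : ℝ) := by exact_mod_cast hi.2
        _ ≤ 2*C*(s:ℝ) := Nat.floor_le (by positivity)
    have hiℓ : i < ℓ := by
      have h3 : 2*C*(s:ℝ) < (ℓ:ℝ) := hlen s (by omega)
      exact_mod_cast lt_of_le_of_lt hhigh h3
    have hi1 : 1 ≤ i := by
      rcases Nat.eq_zero_or_pos i with h | h
      · exfalso
        rw [h] at hlow
        simp at hlow
        linarith
      · exact h
    refine Finset.mem_filter.mpr ⟨Finset.mem_Ico.mpr ⟨hi1, hiℓ⟩, ?_⟩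
    have hceq : ⌈(i:ℝ)/(2*C)⌉ = (s:ℤ) := by
      rw [Int.ceil_eq_iff]
      constructor
      · push_cast
        rw [lt_div_iff₀ hC2]
        nlinarith
      · push_cast
        rw [div_le_iff₀ hC2]
        nlinarith
    rw [hceq]
    exact Int.toNat_natCast s
  have hcard : ∀ s ∈ Finset.Ico 1 n, 2*C - 1 ≤ ((A s).card : ℝ) := by
    intro s hs
    have h1 := Finset.card_le_card (hsub s hs)
    rw [Nat.card_Ioc] at h1
    have hmono : ⌊2*C*((s:ℝ)-1)⌋₊ ≤ ⌊2*C*(s:ℝ)⌋₊ := by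
      refine Nat.floor_mono ?_
      nlinarith [Finset.mem_Ico.mp hs]
    have h2 : ((⌊2*C*(s:ℝ)⌋₊ - ⌊2*C*((s:ℝ)-1)⌋₊ : ℕ) : ℝ)
        = (⌊2*C*(s:ℝ)⌋₊ : ℝ) - (⌊2*C*((s:ℝ)-1)⌋₊ : ℝ) := by
      rw [Nat.cast_sub hmono]
    have h3 : 2*C*(s:ℝ) - 1 < (⌊2*C*(s:ℝ)⌋₊ : ℝ) := Nat.sub_one_lt_floor _
    have h4 : (⌊2*C*((s:ℝ)-1)⌋₊ : ℝ) ≤ 2*C*((s:ℝ)-1) := by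
      refine Nat.floor_le ?_
      have hs1 : 1 ≤ s := (Finset.mem_Ico.mp hs).1
      have : (1:ℝ) ≤ (s:ℝ) := by exact_mod_cast hs1
      nlinarith
    have h5 : ((⌊2*C*(s:ℝ)⌋₊ - ⌊2*C*((s:ℝ)-1)⌋₊ : ℕ) : ℝ) ≤ ((A s).card : ℝ) := by
      exact_mod_cast h1
    rw [h2] at h5
    linarith
  have hdisj : (Finset.Ico 1 n : Set ℕ).PairwiseDisjoint A := by
    intro s hs s' hs' hne
    rw [Function.onFun, Finset.disjoint_left]
    intro i hi hi'
    rw [hA] at hi hi'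
    exact hne ((Finset.mem_filter.mp hi).2.symm.trans (Finset.mem_filter.mp hi').2)
  have hbig : ∑ s ∈ Finset.Ico 1 n, ((A s).card : ℝ) * 2^s
      ≤ ∑ i ∈ Finset.Ico 1 ℓ, (2:ℝ)^((⌈(i:ℝ)/(2*C)⌉).toNat) := by
    calc ∑ s ∈ Finset.Ico 1 n, ((A s).card : ℝ) * 2^s
        = ∑ s ∈ Finset.Ico 1 n, ∑ i ∈ A s, (2:ℝ)^((⌈(i:ℝ)/(2*C)⌉).toNat) := by
          refine Finset.sum_congr rfl fun s hs => ?_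
          rw [Finset.sum_congr rfl (fun i hi => by
            rw [(Finset.mem_filter.mp hi).2] : ∀ i ∈ A s,
              (2:ℝ)^((⌈(i:ℝ)/(2*C)⌉).toNat) = 2^s), Finset.sum_const, nsmul_eq_mul]
      _ = ∑ i ∈ (Finset.Ico 1 n).biUnion A, (2:ℝ)^((⌈(i:ℝ)/(2*C)⌉).toNat) :=
          (Finset.sum_biUnion hdisj).symm
      _ ≤ ∑ i ∈ Finset.Ico 1 ℓ, (2:ℝ)^((⌈(i:ℝ)/(2*C)⌉).toNat) := by
          refine Finset.sum_le_sum_of_subset_of_nonneg ?_ (fun i _ _ => by positivity)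
          intro i hi
          obtain ⟨s, hs, hiA⟩ := Finset.mem_biUnion.mp hi
          exact (Finset.mem_filter.mp hiA).1
  have hgeom : ∑ s ∈ Finset.Ico 1 n, (2:ℝ)^s = 2^n - 2 := by
    rw [geom_sum_Ico (by norm_num : (2:ℝ) ≠ 1) (by omega : 1 ≤ n)]
    norm_num
  have hmid : (2*C - 1) * (2^n - 2) ≤ ∑ s ∈ Finset.Ico 1 n, ((A s).card : ℝ) * 2^s := by
    rw [← hgeom, Finset.mul_sum]
    refine Finset.sum_le_sum fun s hs => ?_
    exact mul_le_mul_of_nonneg_right (hcard s hs) (by positivity)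
  have h4n : (4:ℝ) ≤ 2^n := by
    calc (4:ℝ) = 2^2 := by norm_num
      _ ≤ 2^n := pow_le_pow_right₀ (by norm_num) hn2
  have hfinal : (C - 1/2) * 2^n ≤ (2*C - 1) * (2^n - 2) := by nlinarith
  linarith

lemma main_bound (hq : 2 ≤ q) (hAEnn : ∀ i j, 0 ≤ AE i j) (hAVnn : ∀ i, 0 ≤ AV i)
    (hperm : Permissive G AE AV) {C : ℝ} (hC1 : 1 ≤ C)
    (hCI : CouplingIndependence G AE AV C) :
    ∀ ℓ : ℕ, 1 ≤ ℓ → ∀ (Λ : Finset V) (σ τ : V → Fin q) (v : V), DifferOnlyAt Λ σ τ v →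
      ∑ u ∈ far G v ℓ, tvDist (marginalAt (condDist G AE AV Λ σ) u)
          (marginalAt (condDist G AE AV Λ τ) u)
        ≤ 2*C * ((2:ℝ)^((⌈(ℓ:ℝ)/(2*C)⌉).toNat))⁻¹ := by
  intro ℓ
  induction ℓ using Nat.strong_induction_on with
  | _ ℓ IH =>
  intro hℓ Λ σ τ v hdiff
  have hC2 : (0:ℝ) < 2*C := by linarith
  have hceilpos : 0 < ⌈(ℓ:ℝ)/(2*C)⌉ := by
    rw [Int.ceil_pos]
    positivity
  set n : ℕ := (⌈(ℓ:ℝ)/(2*C)⌉).toNat with hn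
  have hnℤ : (n:ℤ) = ⌈(ℓ:ℝ)/(2*C)⌉ := Int.toNat_of_nonneg hceilpos.le
  have hn1 : 1 ≤ n := by
    have h := hceilpos
    rw [← hnℤ] at h
    exact_mod_cast h
  have hW := hCI Λ σ τ v hdiff
  rcases Nat.lt_or_ge n 2 with hn2 | hn2
  · -- base case: n = 1, bound is C
    have hneq : n = 1 := by omega
    have hgoal : 2*C * ((2:ℝ)^n)⁻¹ = C := by
      rw [hneq, pow_one]
      ring
    rw [hgoal]
    refine le_of_forall_pos_le_add fun ε hε => ?_
    obtain ⟨π, hπ, hcost⟩ := exists_coupling_cost_lt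
      (condDist_nonneg G AE AV hAEnn hAVnn hperm Λ σ)
      (condDist_nonneg G AE AV hAEnn hAVnn hperm Λ τ)
      (condDist_sum G AE AV hperm Λ σ) (condDist_sum G AE AV hperm Λ τ) hW hε
    calc ∑ u ∈ far G v ℓ, tvDist (marginalAt (condDist G AE AV Λ σ) u)
          (marginalAt (condDist G AE AV Λ τ) u)
        ≤ ∑ u ∈ far G v ℓ, ∑ p : (V → Fin q) × (V → Fin q),
            π p * (if p.1 u ≠ p.2 u then (1:ℝ) else 0) :=
          Finset.sum_le_sum fun u _ => tvDist_marginal_le_coupling hπ u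
      _ ≤ ∑ u : V, ∑ p : (V → Fin q) × (V → Fin q),
            π p * (if p.1 u ≠ p.2 u then (1:ℝ) else 0) := by
          refine Finset.sum_le_sum_of_subset_of_nonneg (Finset.subset_univ _) fun u _ _ => ?_
          exact Finset.sum_nonneg fun p _ => mul_nonneg (hπ.1 p) (by positivity)
      _ = ∑ p : (V → Fin q) × (V → Fin q), π p * hamming p.1 p.2 :=
          (cost_eq_sum_disagree π).symm
      _ ≤ C + ε := hcost.le
  · -- inductive case
    have h2Cℓ : 2*C < (ℓ:ℝ) := by
      have : (1:ℤ) < ⌈(ℓ:ℝ)/(2*C)⌉ := by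
        rw [← hnℤ]
        exact_mod_cast hn2
      rw [Int.lt_ceil] at this
      push_cast at this
      rw [lt_div_iff₀ hC2] at this
      linarith
    have hℓ3 : 2 ≤ ℓ := by
      rcases Nat.lt_or_ge ℓ 2 with h | h
      · exfalso
        have hℓ1 : ℓ = 1 := by omega
        rw [hℓ1] at h2Cℓ
        push_cast at h2Cℓ
        linarith
      · exact h
    obtain ⟨π, hπ, hcost⟩ := exists_coupling_cost_lt
      (condDist_nonneg G AE AV hAEnn hAVnn hperm Λ σ)
      (condDist_nonneg G AE AV hAEnn hAVnn hperm Λ τ)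
      (condDist_sum G AE AV hperm Λ σ) (condDist_sum G AE AV hperm Λ τ) hW
      (by norm_num : (0:ℝ) < 1/4)
    set dcp : V → ℝ := fun w => ∑ p : (V → Fin q) × (V → Fin q),
      π p * (if p.1 w ≠ p.2 w then (1:ℝ) else 0) with hdcp
    have hdcpnn : ∀ w, 0 ≤ dcp w := fun w =>
      Finset.sum_nonneg fun p _ => mul_nonneg (hπ.1 p) (by positivity)
    set α : ℕ → ℝ := fun k => ∑ w ∈ sphere G v k, dcp w with hα
    have hαnn : ∀ k, 0 ≤ α k := fun k => Finset.sum_nonneg fun w _ => hdcpnn w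
    have hdv : dcp v = 1 :=
      coupling_pinned_disagree G AE AV hperm hdiff.1 hdiff.2.1 hπ
    -- sphere-sum bound
    have hvnot : ∀ k ∈ Finset.Ico 1 ℓ, v ∉ sphere G v k := by
      intro k hk hv
      rw [sphere, Finset.mem_filter, SimpleGraph.dist_self] at hv
      rw [Finset.mem_Ico] at hk
      omega
    have hsphdisj : (Finset.Ico 1 ℓ : Set ℕ).PairwiseDisjoint (sphere G v) := by
      intro a _ b _ hab
      rw [Function.onFun, Finset.disjoint_left]
      intro w hw hw'
      rw [sphere, Finset.mem_filter] at hw hw'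
      exact hab (hw.2.2.symm.trans hw'.2.2)
    have hαsum : ∑ k ∈ Finset.Ico 1 ℓ, α k ≤ C - 3/4 := by
      have h1 : (1:ℝ) + ∑ k ∈ Finset.Ico 1 ℓ, α k
          ≤ ∑ p : (V → Fin q) × (V → Fin q), π p * hamming p.1 p.2 := by
        rw [cost_eq_sum_disagree π]
        have hvT : v ∉ (Finset.Ico 1 ℓ).biUnion (sphere G v) := by
          intro hv
          obtain ⟨k, hk, hvk⟩ := Finset.mem_biUnion.mp hv
          exact hvnot k hk hvk
        calc (1:ℝ) + ∑ k ∈ Finset.Ico 1 ℓ, α k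
            = dcp v + ∑ w ∈ (Finset.Ico 1 ℓ).biUnion (sphere G v), dcp w := by
              rw [hdv, Finset.sum_biUnion hsphdisj]
          _ = ∑ w ∈ insert v ((Finset.Ico 1 ℓ).biUnion (sphere G v)), dcp w :=
              (Finset.sum_insert hvT).symm
          _ ≤ ∑ w : V, dcp w :=
              Finset.sum_le_sum_of_subset_of_nonneg (Finset.subset_univ _)
                fun w _ _ => hdcpnn w
      linarith
    -- pigeonhole
    set β : ℕ → ℝ := fun k => (2:ℝ)^((⌈((ℓ - k : ℕ):ℝ)/(2*C)⌉).toNat) * ((2:ℝ)^n)⁻¹ with hβ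
    have hpig : ∃ k ∈ Finset.Ico 1 ℓ, α k ≤ β k := by
      by_contra hcon
      push_neg at hcon
      have hico : (Finset.Ico 1 ℓ).Nonempty := ⟨1, Finset.mem_Ico.mpr ⟨le_refl 1, hℓ3⟩⟩
      have hlt : ∑ k ∈ Finset.Ico 1 ℓ, β k < ∑ k ∈ Finset.Ico 1 ℓ, α k :=
        Finset.sum_lt_sum_of_nonempty hico fun k hk => hcon k hk
      have hre : ∑ k ∈ Finset.Ico 1 ℓ, (2:ℝ)^((⌈((ℓ - k : ℕ):ℝ)/(2*C)⌉).toNat)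
          = ∑ i ∈ Finset.Ico 1 ℓ, (2:ℝ)^((⌈(i:ℝ)/(2*C)⌉).toNat) := by
        refine Finset.sum_nbij' (fun k => ℓ - k) (fun i => ℓ - i) ?_ ?_ ?_ ?_ ?_
        · intro k hk
          rw [Finset.mem_Ico] at hk ⊢
          omega
        · intro i hi
          rw [Finset.mem_Ico] at hi ⊢
          omega
        · intro k hk
          rw [Finset.mem_Ico] at hk
          omega
        · intro i hi
          rw [Finset.mem_Ico] at hi
          omega
        · intro k _
          rfl
      have hβsum : C - 1/2 ≤ ∑ k ∈ Finset.Ico 1 ℓ, β k := by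
        have hb := beta_sum_lower hC1 hnℤ hn2
        rw [← hre] at hb
        have h2n : (0:ℝ) < (2:ℝ)^n := by positivity
        have h3 := mul_le_mul_of_nonneg_right hb (inv_nonneg.mpr h2n.le)
        rw [mul_assoc, mul_inv_cancel₀ h2n.ne', mul_one] at h3
        rw [hβ, ← Finset.sum_mul]
        exact h3
      linarith
    obtain ⟨k, hkIco, hαβ⟩ := hpig
    rw [Finset.mem_Ico] at hkIco
    obtain ⟨hk1, hkℓ⟩ := hkIco
    set m : ℕ := (⌈((ℓ - k : ℕ):ℝ)/(2*C)⌉).toNat with hm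
    set B' : ℝ := 2*C * ((2:ℝ)^m)⁻¹ with hB'
    have hB'nn : 0 ≤ B' := by rw [hB']; positivity
    set Λ' : Finset V := Λ ∪ sphere G v k with hΛ'
    have hΛΛ' : Λ ⊆ Λ' := Finset.subset_union_left
    have hSΛ' : sphere G v k ⊆ Λ' := Finset.subset_union_right
    have hvΛ' : v ∈ Λ' := hΛΛ' hdiff.1
    have hvsphere : v ∉ sphere G v k := by
      intro hv
      rw [sphere, Finset.mem_filter, SimpleGraph.dist_self] at hv
      omega
    -- the one-step bounds for the chain lemma
    set J : V → ℝ := fun w => if w ∈ sphere G v k then B' else 0 with hJ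
    have hJnn : ∀ w, 0 ≤ J w := by
      intro w
      by_cases h : w ∈ sphere G v k
      · simp only [hJ]
        rw [if_pos h]
        exact hB'nn
      · simp only [hJ]
        rw [if_neg h]
    have hbound : ∀ w ∈ insert v (sphere G v k), ∀ (z : V → Fin q) (cc : Fin q), cc ≠ z w →
        ∑ u ∈ far G v ℓ, tvDist (marginalAt (condDist G AE AV Λ' z) u)
          (marginalAt (condDist G AE AV Λ' (Function.update z w cc)) u) ≤ J w := by
      intro w hw z cc hcc
      rcases Finset.mem_insert.mp hw with hwv | hwS
      · -- Markov step at v: zero influence far away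
        rw [hwv] at hcc ⊢
        have hzero : ∀ u ∈ far G v ℓ, tvDist (marginalAt (condDist G AE AV Λ' z) u)
            (marginalAt (condDist G AE AV Λ' (Function.update z v cc)) u) = 0 := by
          intro u hu
          rw [far, Finset.mem_filter] at hu
          have heq : ∀ c : Fin q, marginalAt (condDist G AE AV Λ' z) u c
              = marginalAt (condDist G AE AV Λ' (Function.update z v cc)) u c := by
            intro c
            exact markov_step G AE AV hAEnn hAVnn hperm hk1 hSΛ' hvΛ'
              (fun w' hw' => (Function.update_of_ne hw' _ _).symm)
              (fun _ => lt_of_lt_of_le hkℓ hu.2.2) c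
          rw [funext heq]
          unfold tvDist
          simp
        rw [Finset.sum_congr rfl hzero, Finset.sum_const_zero]
        simp only [hJ]
        rw [if_neg hvsphere]
      · -- step at a sphere vertex: use the induction hypothesis at radius ℓ - k
        have hdiff' : DifferOnlyAt Λ' z (Function.update z w cc) w := by
          refine ⟨hSΛ' hwS, ?_, fun w' _ hw' => (Function.update_of_ne hw' _ _).symm⟩
          rw [Function.update_self]
          exact fun h => hcc h.symm
        have hmono : ∑ u ∈ far G v ℓ, tvDist (marginalAt (condDist G AE AV Λ' z) u)
              (marginalAt (condDist G AE AV Λ' (Function.update z w cc)) u)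
            ≤ ∑ u ∈ far G w (ℓ - k), tvDist (marginalAt (condDist G AE AV Λ' z) u)
              (marginalAt (condDist G AE AV Λ' (Function.update z w cc)) u) := by
          refine Finset.sum_le_sum_of_subset_of_nonneg (far_subset_far G hwS)
            fun u _ _ => tvDist_nonneg _ _
        have hIH := IH (ℓ - k) (by omega) (by omega) Λ' z (Function.update z w cc) w hdiff'
        simp only [hJ]
        rw [if_pos hwS]
        exact hmono.trans hIH
    -- per-pair chain bound
    have hpair : ∀ p : (V → Fin q) × (V → Fin q), π p ≠ 0 →
        ∑ u ∈ far G v ℓ, tvDist (marginalAt (condDist G AE AV Λ' p.1) u)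
          (marginalAt (condDist G AE AV Λ' p.2) u)
        ≤ (∑ w ∈ sphere G v k, if p.1 w ≠ p.2 w then (1:ℝ) else 0) * B' := by
      intro p hp
      obtain ⟨hp1, hp2⟩ := coupling_support G AE AV hπ hp
      have hsubD : Λ'.filter (fun w => p.1 w ≠ p.2 w) ⊆ insert v (sphere G v k) := by
        intro w hw
        rw [Finset.mem_filter] at hw
        rcases Finset.mem_union.mp hw.1 with hwΛ | hwS
        · by_cases hwv : w = v
          · rw [hwv]; exact Finset.mem_insert_self v _
          · exfalso
            exact hw.2 ((hp1 w hwΛ).trans ((hdiff.2.2 w hwΛ hwv).trans (hp2 w hwΛ).symm))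
        · exact Finset.mem_insert_of_mem hwS
      have hchain := chain G AE AV Λ' (far G v ℓ) J hJnn (insert v (sphere G v k)) hbound
        (Λ'.filter (fun w => p.1 w ≠ p.2 w)).card p.1 p.2 rfl hsubD
      refine hchain.trans ?_
      calc ∑ w ∈ Λ'.filter (fun w => p.1 w ≠ p.2 w), J w
          = ∑ w ∈ (Λ'.filter (fun w => p.1 w ≠ p.2 w)).filter (fun w => w ∈ sphere G v k), B' := by
            simp only [hJ]
            exact (Finset.sum_filter _ _).symm
        _ ≤ ∑ w ∈ (sphere G v k).filter (fun w => p.1 w ≠ p.2 w), B' := by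
            refine Finset.sum_le_sum_of_subset_of_nonneg ?_ (fun w _ _ => hB'nn)
            intro w hw
            rw [Finset.mem_filter] at hw ⊢
            rw [Finset.mem_filter] at hw
            exact ⟨hw.2, hw.1.2⟩
        _ = (∑ w ∈ sphere G v k, if p.1 w ≠ p.2 w then (1:ℝ) else 0) * B' := by
            rw [Finset.sum_filter, Finset.sum_mul]
            refine Finset.sum_congr rfl fun w _ => ?_
            by_cases h : p.1 w ≠ p.2 w
            · simp [h]
            · simp [h]
    -- assemble
    have hfin : ∑ u ∈ far G v ℓ, tvDist (marginalAt (condDist G AE AV Λ σ) u)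
        (marginalAt (condDist G AE AV Λ τ) u) ≤ α k * B' := by
      calc ∑ u ∈ far G v ℓ, tvDist (marginalAt (condDist G AE AV Λ σ) u)
            (marginalAt (condDist G AE AV Λ τ) u)
          ≤ ∑ u ∈ far G v ℓ, ∑ p : (V → Fin q) × (V → Fin q), π p *
              tvDist (marginalAt (condDist G AE AV Λ' p.1) u)
                     (marginalAt (condDist G AE AV Λ' p.2) u) :=
            Finset.sum_le_sum fun u _ =>
              tvDist_marginal_convex G AE AV hAEnn hAVnn hperm hΛΛ' hπ u
        _ = ∑ p : (V → Fin q) × (V → Fin q), π p *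
              ∑ u ∈ far G v ℓ, tvDist (marginalAt (condDist G AE AV Λ' p.1) u)
                     (marginalAt (condDist G AE AV Λ' p.2) u) := by
            rw [Finset.sum_comm]
            exact Finset.sum_congr rfl fun p _ => (Finset.mul_sum _ _ _).symm
        _ ≤ ∑ p : (V → Fin q) × (V → Fin q), π p *
              ((∑ w ∈ sphere G v k, if p.1 w ≠ p.2 w then (1:ℝ) else 0) * B') := by
            refine Finset.sum_le_sum fun p _ => ?_
            by_cases hp : π p = 0
            · rw [hp, zero_mul, zero_mul]
            · exact mul_le_mul_of_nonneg_left (hpair p hp) (hπ.1 p)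
        _ = α k * B' := by
            have hsw : ∀ p : (V → Fin q) × (V → Fin q), π p *
                ((∑ w ∈ sphere G v k, if p.1 w ≠ p.2 w then (1:ℝ) else 0) * B')
                = (∑ w ∈ sphere G v k, π p * (if p.1 w ≠ p.2 w then (1:ℝ) else 0)) * B' := by
              intro p
              rw [← mul_assoc, Finset.mul_sum, Finset.sum_mul]
            rw [Finset.sum_congr rfl fun p _ => hsw p, ← Finset.sum_mul]
            congr 1
            simp only [hα, hdcp]
            exact Finset.sum_comm
    refine hfin.trans ?_
    have hend : β k * B' = 2*C * ((2:ℝ)^n)⁻¹ := by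
      simp only [hβ, hB']
      rw [← hm]
      have h2m : ((2:ℝ)^m) ≠ 0 := by positivity
      have h2n : ((2:ℝ)^n) ≠ 0 := by positivity
      field_simp
    calc α k * B' ≤ β k * B' := mul_le_mul_of_nonneg_right hαβ hB'nn
      _ = 2*C * ((2:ℝ)^n)⁻¹ := hend

end SpinProof
open SpinFormal

/-- coupling independence implies total influence decay with rate
`δ(ℓ) = 2C·2^{-⌈ℓ/(2C)⌉}`. -/
theorem total_influence_decay_of_coupling_independence
    {V : Type} [Fintype V] [DecidableEq V] {q : ℕ}
    (G : SimpleGraph V) (AE : Fin q → Fin q → ℝ) (AV : Fin q → ℝ)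
    (hq : 2 ≤ q)
    (hAEsymm : ∀ i j, AE i j = AE j i)
    (hAEnn : ∀ i j, 0 ≤ AE i j) (hAVnn : ∀ i, 0 ≤ AV i)
    (hperm : Permissive G AE AV)
    (C : ℝ) (hC : 0 < C) (hCI : CouplingIndependence G AE AV C)
    (Λ : Finset V) (σ τ : V → Fin q) (v : V) (hdiff : DifferOnlyAt Λ σ τ v)
    (ℓ : ℕ) (hℓ : 0 < ℓ) :
    ∑ u ∈ sphere G v ℓ,
        tvDist (marginalAt (condDist G AE AV Λ σ) u)
               (marginalAt (condDist G AE AV Λ τ) u)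
      ≤ 2 * C * (2 : ℝ) ^ (-(⌈(ℓ : ℝ) / (2 * C)⌉ : ℤ)) := by
  have hC1 : 1 ≤ C := SpinProof.one_le_C G AE AV hq hAEnn hAVnn hperm hCI v
  have hmain := SpinProof.main_bound G AE AV hq hAEnn hAVnn hperm hC1 hCI ℓ hℓ Λ σ τ v hdiff
  have hceilpos : 0 < ⌈(ℓ:ℝ)/(2*C)⌉ := by
    rw [Int.ceil_pos]
    have h1 : (0:ℝ) < (ℓ:ℝ) := by exact_mod_cast hℓ
    have h2 : (0:ℝ) < 2*C := by linarith
    exact div_pos h1 h2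
  have h1 : ((2:ℝ))^(-(⌈(ℓ:ℝ)/(2*C)⌉ : ℤ)) = ((2:ℝ)^((⌈(ℓ:ℝ)/(2*C)⌉).toNat))⁻¹ := by
    rw [zpow_neg]
    congr 1
    conv_lhs => rw [← Int.toNat_of_nonneg hceilpos.le]
    rw [zpow_natCast]
  rw [h1]
  refine le_trans ?_ hmain
  refine Finset.sum_le_sum_of_subset_of_nonneg (SpinProof.sphere_subset_far G v ℓ)
    fun u _ _ => SpinProof.tvDist_nonneg _ _
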